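/- arXiv:2509.02188 — 2 statements merged into one kernel-verified Lean document; each statement's English description precedes it below -/
import Mathlib

section
/- Let d ∈ ℕ with d ≥ 1, let c₁,...,c_d be nonnegative integers with ∑_{i=1}^d c_i ≥ d, and assume that whenever c_i = 0 for some i < d, then c_{i+1} = 0. Let f : ℕ → ℝ be strictly decreasing and positive. Then ∑_{i=1}^d c_i f(i) ≥ ∑_{i=1}^d f(i). -/
open Finset

lemma sum_weighted_aux (f : ℕ → ℝ) (hf : StrictAnti f) (hfpos : ∀ n, 0 < f n) :
    ∀ d, 1 ≤ d → ∀ m, d ≤ m → ∀ c : ℕ → ℕ, m ≤ ∑ i ∈ Icc 1 d, c i →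
    (∀ i, 1 ≤ i → i < d → c i = 0 → c (i + 1) = 0) →
    ∑ i ∈ Icc 1 m, f i ≤ ∑ i ∈ Icc 1 d, (c i : ℝ) * f i := by
  intro d hd
  induction d, hd using Nat.le_induction with
  | base =>
    intro m hm c hsum _
    simp only [Icc_self, sum_singleton] at hsum ⊢
    have h1 : ∑ i ∈ Icc 1 m, f i ≤ (Icc 1 m).card • f 1 := by
      apply Finset.sum_le_card_nsmul
      intro i hi
      simp only [mem_Icc] at hi
      exact hf.antitone hi.1
    have hcard : (Icc 1 m).card = m := by simp
    rw [hcard] at h1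
    calc ∑ i ∈ Icc 1 m, f i ≤ (m : ℝ) * f 1 := by simpa using h1
      _ ≤ (c 1 : ℝ) * f 1 := by
          apply mul_le_mul_of_nonneg_right _ (hfpos 1).le
          exact_mod_cast hsum
  | succ d hd ih =>
    intro m hm c hsum hgap
    rw [Finset.sum_Icc_succ_top (by omega : 1 ≤ d + 1)] at hsum
    rw [Finset.sum_Icc_succ_top (by omega : 1 ≤ d + 1)]
    by_cases hc : c (d + 1) = 0
    · rw [hc] at hsum
      simp only [hc, Nat.cast_zero, zero_mul, add_zero] at *
      exact le_trans (by norm_num)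
        (ih m (by omega) c (by omega) (fun i h1 h2 => hgap i h1 (by omega)))
    · -- all c i positive on [1, d]
      have hpos : ∀ i, 1 ≤ i → i ≤ d → 1 ≤ c i := by
        intro i h1 h2
        by_contra h
        have hz : c i = 0 := by omega
        have chain : ∀ j, i ≤ j → j ≤ d + 1 → c j = 0 := by
          intro j
          induction j with
          | zero => omega
          | succ j jih =>
            intro hij hjd
            rcases Nat.lt_or_ge i (j + 1) with hlt | hge
            · have hcj : c j = 0 := jih (by omega) (by omega)
              exact hgap j (by omega) (by omega) hcj
            · have : i = j + 1 := by omega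
              rw [← this]; exact hz
        exact hc (chain (d + 1) (by omega) le_rfl)
      have hsd : d ≤ ∑ i ∈ Icc 1 d, c i := by
        calc d = (Icc 1 d).card • 1 := by simp
          _ ≤ ∑ i ∈ Icc 1 d, c i := by
            apply Finset.card_nsmul_le_sum
            intro i hi
            simp only [mem_Icc] at hi
            exact hpos i hi.1 hi.2
      set m' := max d (m - c (d + 1)) with hm'
      have hm'le : m' ≤ ∑ i ∈ Icc 1 d, c i := by
        apply max_le hsd
        omega
      have hm'm : m' ≤ m := by omega
      have IH := ih m' (le_max_left _ _) c hm'le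
        (fun i h1 h2 => hgap i h1 (by omega))
      have hsplit : ∑ i ∈ Icc 1 m', f i + ∑ i ∈ Ioc m' m, f i = ∑ i ∈ Icc 1 m, f i := by
        rw [show Icc 1 m' = Ioc 0 m' by (rw [← Finset.Icc_add_one_left_eq_Ioc]; rfl),
            show Icc 1 m = Ioc 0 m by (rw [← Finset.Icc_add_one_left_eq_Ioc]; rfl)]
        exact Finset.sum_Ioc_consecutive f (Nat.zero_le m') hm'm
      have htail : ∑ i ∈ Ioc m' m, f i ≤ (c (d + 1) : ℝ) * f (d + 1) := by
        have h1 : ∑ i ∈ Ioc m' m, f i ≤ (Ioc m' m).card • f (d + 1) := by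
          apply Finset.sum_le_card_nsmul
          intro i hi
          simp only [mem_Ioc] at hi
          exact hf.antitone (by omega)
        have hcard : (Ioc m' m).card = m - m' := by simp
        rw [hcard] at h1
        calc ∑ i ∈ Ioc m' m, f i ≤ ((m - m' : ℕ) : ℝ) * f (d + 1) := by simpa using h1
          _ ≤ (c (d + 1) : ℝ) * f (d + 1) := by
              apply mul_le_mul_of_nonneg_right _ (hfpos _).le
              have : m - m' ≤ c (d + 1) := by omega
              exact_mod_cast this
      linarith

theorem sum_weighted_ge_sum (d : ℕ) (hd : 1 ≤ d) (c : ℕ → ℕ)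
    (hsum : (d : ℕ) ≤ ∑ i ∈ Icc 1 d, c i)
    (hgap : ∀ i, 1 ≤ i → i < d → c i = 0 → c (i + 1) = 0)
    (f : ℕ → ℝ) (hf : StrictAnti f) (hfpos : ∀ n, 0 < f n) :
    ∑ i ∈ Icc 1 d, f i ≤ ∑ i ∈ Icc 1 d, (c i : ℝ) * f i :=
  sum_weighted_aux f hf hfpos d hd d le_rfl c hsum hgap
end

section
/- For any integer r ≥ 4 and any integer d ≥ r - 1, if λ ≥ d then ∑_{i=1}^{d} i^{-λ} (r(r-1)^{i-1} - 1) < r(r-2). -/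
open Finset

lemma sq_le_two_pow' (d : ℕ) (hd : 4 ≤ d) : d ^ 2 ≤ 2 ^ d := by
  induction d, hd using Nat.le_induction with
  | base => norm_num
  | succ n hn ih =>
    have h2 : 2 * n + 1 ≤ n ^ 2 := by nlinarith
    calc (n + 1) ^ 2 = n ^ 2 + (2 * n + 1) := by ring
    _ ≤ 2 ^ n + 2 ^ n := by omega
    _ = 2 ^ (n + 1) := by ring

lemma pow_swap_le (i d : ℕ) (hi : 3 ≤ i) (hid : i ≤ d) : (d : ℝ) ^ i ≤ (i : ℝ) ^ d := by
  have hi' : (3 : ℝ) ≤ i := by exact_mod_cast hi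
  have hd' : (i : ℝ) ≤ d := by exact_mod_cast hid
  have he : Real.exp 1 ≤ (i : ℝ) := by
    nlinarith [Real.exp_one_lt_d9]
  have h : Real.log (d:ℝ) / (d:ℝ) ≤ Real.log (i:ℝ) / (i:ℝ) :=
    Real.log_div_self_antitoneOn (by simpa using he) (by simpa using he.trans hd') hd'
  have hiPos : (0 : ℝ) < i := by linarith
  have hdPos : (0 : ℝ) < d := by linarith
  have hlog : (i : ℝ) * Real.log d ≤ (d : ℝ) * Real.log i := by
    rw [div_le_div_iff₀ hdPos hiPos] at h
    nlinarith
  have h1 : Real.log ((d : ℝ) ^ i) ≤ Real.log ((i : ℝ) ^ d) := by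
    rw [Real.log_pow, Real.log_pow]
    push_cast
    linarith
  exact (Real.log_le_log_iff (by positivity) (by positivity)).mp h1

lemma pow_swap_le' (i d : ℕ) (hi : 2 ≤ i) (hid : i ≤ d) (hd : 4 ≤ d) :
    (d : ℝ) ^ i ≤ (i : ℝ) ^ d := by
  rcases eq_or_lt_of_le hi with h | h
  · subst_eqs
    have := sq_le_two_pow' d hd
    calc (d : ℝ) ^ 2 = ((d ^ 2 : ℕ) : ℝ) := by push_cast; ring
    _ ≤ ((2 ^ d : ℕ) : ℝ) := by exact_mod_cast this
    _ = (2 : ℝ) ^ d := by push_cast; ring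
  · exact pow_swap_le i d h hid

theorem power_decay_sum_bound_large_exponent (r d : ℕ) (hr : 4 ≤ r) (hd : r - 1 ≤ d)
    (l : ℝ) (hl : (d : ℝ) ≤ l) :
    ∑ i ∈ Icc 1 d, (i : ℝ) ^ (-l) * ((r : ℝ) * ((r : ℝ) - 1) ^ (i - 1) - 1)
      < (r : ℝ) * ((r : ℝ) - 2) := by
  have hr' : (4 : ℝ) ≤ r := by exact_mod_cast hr
  have hd3 : 3 ≤ d := by omega
  -- general rpow bound: for 1 ≤ i, i^(-l) ≤ (i^d)⁻¹
  have key : ∀ i : ℕ, 1 ≤ i → (i : ℝ) ^ (-l) ≤ ((i : ℝ) ^ d)⁻¹ := by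
    intro i hi
    have hi1 : (1 : ℝ) ≤ i := by exact_mod_cast hi
    have := Real.rpow_le_rpow_of_exponent_le hi1 (neg_le_neg hl)
    calc (i : ℝ) ^ (-l) ≤ (i : ℝ) ^ (-(d : ℝ)) := this
    _ = ((i : ℝ) ^ d)⁻¹ := by
        rw [Real.rpow_neg (by linarith), Real.rpow_natCast]
  rcases eq_or_lt_of_le hd3 with hde | hd4
  · -- d = 3, hence r = 4
    have hr4 : r = 4 := by omega
    subst hr4
    have hd' : d = 3 := hde.symm
    subst hd'
    have h2 : (2 : ℝ) ^ (-l) ≤ ((2:ℝ) ^ (3:ℕ))⁻¹ := by exact_mod_cast key 2 (by norm_num)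
    have h3 : (3 : ℝ) ^ (-l) ≤ ((3:ℝ) ^ (3:ℕ))⁻¹ := by exact_mod_cast key 3 (by norm_num)
    rw [show Icc 1 3 = {1, 2, 3} from rfl]
    rw [Finset.sum_insert (by decide), Finset.sum_insert (by decide), Finset.sum_singleton]
    norm_num [Real.one_rpow]
    nlinarith [h2, h3]
  · -- d ≥ 4
    have hd4' : 4 ≤ d := hd4
    have hdR : (4 : ℝ) ≤ d := by exact_mod_cast hd4'
    have hrd : (r : ℝ) - 1 ≤ d := by
      have : r - 1 ≤ d := hd
      have := (Nat.cast_le (α := ℝ)).mpr this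
      push_cast [Nat.cast_sub (by omega : 1 ≤ r)] at this
      linarith
    have hsplit : Icc 1 d = insert 1 (Ioc 1 d) := (Finset.Ioc_insert_left (by omega)).symm
    rw [hsplit, Finset.sum_insert (by simp)]
    have hterm1 : ((1:ℕ) : ℝ) ^ (-l) * ((r : ℝ) * ((r : ℝ) - 1) ^ (1 - 1) - 1) = (r : ℝ) - 1 := by
      norm_num [Real.one_rpow]
    rw [hterm1]
    -- bound tail sum
    have htail : ∑ i ∈ Ioc 1 d, (i : ℝ) ^ (-l) * ((r : ℝ) * ((r : ℝ) - 1) ^ (i - 1) - 1)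
        ≤ ∑ _i ∈ Ioc 1 d, (r : ℝ) / d := by
      apply Finset.sum_le_sum
      intro i hi
      simp only [Finset.mem_Ioc] at hi
      obtain ⟨hi1, hid⟩ := hi
      have hi2 : 2 ≤ i := hi1
      have hiR : (2 : ℝ) ≤ i := by exact_mod_cast hi2
      have hswap := pow_swap_le' i d hi2 hid hd4'
      have hrm1 : (1 : ℝ) ≤ (r : ℝ) - 1 := by linarith
      have hpowpos : (0 : ℝ) < ((r : ℝ) - 1) ^ (i - 1) := by positivity
      have hfac : (r : ℝ) * ((r : ℝ) - 1) ^ (i - 1) - 1 ≤ (r : ℝ) * (d : ℝ) ^ (i - 1) := by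
        have : ((r : ℝ) - 1) ^ (i - 1) ≤ (d : ℝ) ^ (i - 1) :=
          pow_le_pow_left₀ (by linarith) hrd _
        nlinarith
      have hfacpos : (0 : ℝ) ≤ (r : ℝ) * ((r : ℝ) - 1) ^ (i - 1) - 1 := by
        nlinarith [one_le_pow₀ hrm1 (n := i-1)]
      have hipd : (0 : ℝ) < (i : ℝ) ^ d := by positivity
      calc (i : ℝ) ^ (-l) * ((r : ℝ) * ((r : ℝ) - 1) ^ (i - 1) - 1)
          ≤ ((i : ℝ) ^ d)⁻¹ * ((r : ℝ) * (d : ℝ) ^ (i - 1)) := by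
            apply mul_le_mul (key i (by omega)) hfac hfacpos (by positivity)
      _ ≤ (r : ℝ) / d := by
            rw [inv_mul_le_iff₀ hipd]
            have hdp : (0 : ℝ) < d := by linarith
            have hpow : (d : ℝ) ^ (i - 1) * (d : ℝ) = (d : ℝ) ^ i := by
              rw [← pow_succ]
              congr 1
              omega
            rw [mul_div_assoc' ((i:ℝ)^d) _ _, le_div_iff₀ hdp]
            calc (r : ℝ) * (d : ℝ) ^ (i-1) * (d : ℝ) = (r : ℝ) * (d : ℝ) ^ i := by
                  rw [mul_assoc, hpow]
            _ ≤ (i : ℝ) ^ d * (r : ℝ) := by nlinarith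
    have hcard : ∑ _i ∈ Ioc 1 d, (r : ℝ) / d = (d - 1 : ℝ) * ((r : ℝ) / d) := by
      rw [Finset.sum_const, Nat.card_Ioc, nsmul_eq_mul]
      congr 1
      push_cast [Nat.cast_sub (by omega : 1 ≤ d)]
      ring
    rw [hcard] at htail
    have hfin : ((r : ℝ) - 1) + (d - 1 : ℝ) * ((r : ℝ) / d) < (r : ℝ) * ((r : ℝ) - 2) := by
      have hdp : (0 : ℝ) < d := by linarith
      have : (d - 1 : ℝ) * ((r : ℝ) / d) < (r : ℝ) := by
        rw [mul_div_assoc', div_lt_iff₀ hdp]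
        nlinarith
      nlinarith
    linarith
end
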